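/- Let K > 0 and set V = Real.sqrt (1+K). There exist C > 0 and ε₀ > 0 such that for every ε ∈ (0, ε₀) the following holds: set c = V + ε and μ₄ = Real.sqrt((2·V·ε + ε²)/(1 + 2·V·ε + ε²)); then for every function μ : ℝ → ℝ that is differentiable at 0, satisfies μ(0) = μ₄, and satisfies μ(λ)·(c − Real.sqrt(K + 1/(1−μ(λ)²))) = λ for all λ in some neighborhood of 0, one has |deriv μ 0 + 1/(2·ε)| ≤ C. -/

import Mathlib

open Filter

set_option maxHeartbeats 1000000

/-- Implicit differentiation of `d₋(μ) = λ` at `λ = 0`: for `c = V + ε`, `V = √(1+K)`,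
any differentiable branch `μ(λ)` with `μ(0) = μ₄(0,ε)` and
`μ(λ)·(c − √(K + 1/(1−μ(λ)²))) = λ` near `0` satisfies
`∂_λ μ(0) = −(1/(2ε))·(1 + O(ε))`. -/
theorem deriv_mu4_at_zero (K : ℝ) (hK : 0 < K) (V : ℝ) (hV : V = Real.sqrt (1 + K)) :
    ∃ C : ℝ, 0 < C ∧ ∃ ε₀ : ℝ, 0 < ε₀ ∧ ∀ ε : ℝ, 0 < ε → ε < ε₀ →
      ∀ μ : ℝ → ℝ, DifferentiableAt ℝ μ 0 →
        μ 0 = Real.sqrt ((2 * V * ε + ε ^ 2) / (1 + 2 * V * ε + ε ^ 2)) →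
        (∀ᶠ lam in nhds (0 : ℝ),
          μ lam * ((V + ε) - Real.sqrt (K + 1 / (1 - (μ lam) ^ 2))) = lam) →
        |deriv μ 0 + 1 / (2 * ε)| ≤ C := by
  have hV2 : V ^ 2 = 1 + K := by rw [hV]; exact Real.sq_sqrt (by linarith)
  have hV1 : 1 < V := by
    nlinarith [Real.sqrt_nonneg (1 + K), hV ▸ Real.sqrt_nonneg (1 + K)]
  refine ⟨(2 * V + 1) ^ 2 / (4 * V), by positivity, 1, one_pos, ?_⟩
  intro ε hε hε1 μ hdiff hμ0 heq
  set A := 2 * V * ε + ε ^ 2 with hA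
  have hApos : 0 < A := by nlinarith
  have h1A : (0:ℝ) < 1 + A := by linarith
  have hμ4sq : (μ 0) ^ 2 = A / (1 + A) := by
    rw [hμ0]
    rw [show 1 + 2 * V * ε + ε ^ 2 = 1 + A by rw [hA]; ring]
    exact Real.sq_sqrt (by positivity)
  have hone_sub : 1 - (μ 0) ^ 2 = 1 / (1 + A) := by
    rw [hμ4sq]; field_simp; ring
  have hpos1 : 0 < 1 - (μ 0) ^ 2 := by rw [hone_sub]; positivity
  have hVε : 0 < V + ε := by linarith
  have harg : K + 1 / (1 - (μ 0) ^ 2) = (V + ε) ^ 2 := by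
    rw [hone_sub, one_div_one_div]
    linear_combination -hV2
  have hargpos : 0 < K + 1 / (1 - (μ 0) ^ 2) := by rw [harg]; positivity
  have hsq : Real.sqrt (K + 1 / (1 - (μ 0) ^ 2)) = V + ε := by
    rw [harg]; exact Real.sqrt_sq hVε.le
  set m := deriv μ 0 with hmdef
  have hm : HasDerivAt μ m 0 := hdiff.hasDerivAt
  have h1 : HasDerivAt (fun l => (μ l) ^ 2) (2 * μ 0 ^ 1 * m) 0 := by
    have := (hasDerivAt_pow 2 (μ 0)).comp 0 hm
    exact this.congr_deriv (by norm_num)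
  have h2 : HasDerivAt (fun l => 1 - (μ l) ^ 2) (0 - 2 * μ 0 ^ 1 * m) 0 :=
    (hasDerivAt_const 0 (1:ℝ)).sub h1
  have h3 : HasDerivAt (fun l => 1 / (1 - (μ l) ^ 2))
      ((0 * (1 - (μ 0) ^ 2) - 1 * (0 - 2 * μ 0 ^ 1 * m)) / (1 - (μ 0) ^ 2) ^ 2) 0 :=
    (hasDerivAt_const 0 (1:ℝ)).div h2 hpos1.ne'
  have h4 : HasDerivAt (fun l => K + 1 / (1 - (μ l) ^ 2))
      (0 + (0 * (1 - (μ 0) ^ 2) - 1 * (0 - 2 * μ 0 ^ 1 * m)) / (1 - (μ 0) ^ 2) ^ 2) 0 :=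
    (hasDerivAt_const 0 K).add h3
  have h5 : HasDerivAt (fun l => Real.sqrt (K + 1 / (1 - (μ l) ^ 2)))
      (1 / (2 * Real.sqrt (K + 1 / (1 - (μ 0) ^ 2))) *
        (0 + (0 * (1 - (μ 0) ^ 2) - 1 * (0 - 2 * μ 0 ^ 1 * m)) / (1 - (μ 0) ^ 2) ^ 2)) 0 :=
    (Real.hasDerivAt_sqrt hargpos.ne').comp 0 h4
  have h6 : HasDerivAt (fun l => (V + ε) - Real.sqrt (K + 1 / (1 - (μ l) ^ 2)))
      (0 - 1 / (2 * Real.sqrt (K + 1 / (1 - (μ 0) ^ 2))) *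
        (0 + (0 * (1 - (μ 0) ^ 2) - 1 * (0 - 2 * μ 0 ^ 1 * m)) / (1 - (μ 0) ^ 2) ^ 2)) 0 :=
    (hasDerivAt_const 0 (V + ε)).sub h5
  have h7 : HasDerivAt (fun l => μ l * ((V + ε) - Real.sqrt (K + 1 / (1 - (μ l) ^ 2))))
      (m * ((V + ε) - Real.sqrt (K + 1 / (1 - (μ 0) ^ 2))) +
        μ 0 * (0 - 1 / (2 * Real.sqrt (K + 1 / (1 - (μ 0) ^ 2))) *
          (0 + (0 * (1 - (μ 0) ^ 2) - 1 * (0 - 2 * μ 0 ^ 1 * m)) / (1 - (μ 0) ^ 2) ^ 2))) 0 :=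
    hm.mul h6
  have h8 : HasDerivAt (fun l : ℝ => l)
      (m * ((V + ε) - Real.sqrt (K + 1 / (1 - (μ 0) ^ 2))) +
        μ 0 * (0 - 1 / (2 * Real.sqrt (K + 1 / (1 - (μ 0) ^ 2))) *
          (0 + (0 * (1 - (μ 0) ^ 2) - 1 * (0 - 2 * μ 0 ^ 1 * m)) / (1 - (μ 0) ^ 2) ^ 2))) 0 :=
    h7.congr_of_eventuallyEq (heq.mono fun l h => h.symm)
  have hD : m * ((V + ε) - Real.sqrt (K + 1 / (1 - (μ 0) ^ 2))) +
      μ 0 * (0 - 1 / (2 * Real.sqrt (K + 1 / (1 - (μ 0) ^ 2))) *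
        (0 + (0 * (1 - (μ 0) ^ 2) - 1 * (0 - 2 * μ 0 ^ 1 * m)) / (1 - (μ 0) ^ 2) ^ 2)) = 1 :=
    h8.unique (hasDerivAt_id 0)
  rw [hsq, hone_sub] at hD
  -- hD : m * ((V+ε) - (V+ε)) + μ 0 * (0 - 1/(2*(V+ε)) * (0 + (0*(1/(1+A)) - 1*(0 - 2*μ 0^1*m))/(1/(1+A))^2)) = 1
  have e : μ 0 * (0 - 1 / (2 * (V + ε)) *
      (0 + (0 * (1 / (1 + A)) - 1 * (0 - 2 * μ 0 ^ 1 * m)) / (1 / (1 + A)) ^ 2)) =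
      -((μ 0) ^ 2 * m * (1 + A) ^ 2 / (V + ε)) := by
    field_simp
    ring
  rw [e] at hD
  have h9 : -((μ 0) ^ 2 * m * (1 + A) ^ 2 / (V + ε)) = 1 := by linear_combination hD
  rw [hμ4sq] at h9
  have h10 : (1 + A) * (A * m * (1 + A)) = (1 + A) * (-(V + ε)) := by
    field_simp at h9
    linear_combination -(1 + A) * h9
  have h11 := mul_left_cancel₀ h1A.ne' h10
  have hmval : m = -(V + ε) / (A * (1 + A)) := by
    field_simp
    linear_combination h11
  have hval : m + 1 / (2 * ε) = ((2 * V + ε) ^ 2 - 1) / (2 * (2 * V + ε) * (1 + A)) := by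
    rw [hmval, hA]
    have h2Vε : (0:ℝ) < 2 * V + ε := by linarith
    field_simp
    ring
  clear h1 h2 h3 h4 h5 h6 h7 h8 hD e h9 h10 h11 hm hdiff heq hmval hμ0 hμ4sq hone_sub harg hargpos hsq hpos1
  have h2V : (0:ℝ) < 2 * V + ε := by linarith
  rw [hval, abs_of_nonneg (div_nonneg (by nlinarith) (by positivity))]
  apply div_le_div₀ (by positivity)
  · nlinarith
  · positivity
  · nlinarith [mul_pos h2V hApos, mul_pos h2V h1A]
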